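/- Let C be a d-clutter on a finite vertex set V. If the simplicial complex ⟨C^∨⟩ is vertex decomposable, then C is chordal. -/
import Mathlib


namespace ClutterPaper

variable {α : Type*} [DecidableEq α]

/-- `C` is a uniform clutter on vertex set `V` all of whose circuits have cardinality `c`
(i.e. a `(c-1)`-dimensional uniform clutter). -/
def IsClutter (V : Finset α) (c : ℕ) (C : Finset (Finset α)) : Prop :=
  ∀ F ∈ C, F ⊆ V ∧ F.card = c

/-- The complement clutter `C̄`: all `c`-subsets of `V` not in `C`. -/
def compClutter (V : Finset α) (c : ℕ) (C : Finset (Finset α)) : Finset (Finset α) :=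
  V.powersetCard c \ C

/-- `C^∨ = { V \ F | F ∈ C̄ }`. -/
def clutterDual (V : Finset α) (c : ℕ) (C : Finset (Finset α)) : Finset (Finset α) :=
  (compClutter V c C).image fun F => V \ F

/-- `A` is a clique of the clutter `C` (with circuit cardinality `c`) on vertex set `V`:
all `c`-subsets of `A` are circuits. -/
def IsClique (V : Finset α) (c : ℕ) (C : Finset (Finset α)) (A : Finset α) : Prop :=
  A ⊆ V ∧ ∀ F ⊆ A, F.card = c → F ∈ C

/-- The closed neighborhood `N_C[e] = e ∪ { v ∈ V | e ∪ {v} ∈ C }`. -/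
def closedNbhd (V : Finset α) (C : Finset (Finset α)) (e : Finset α) : Finset α :=
  e ∪ V.filter fun v => insert v e ∈ C

/-- `e` is a maximal subcircuit of the clutter `C` with circuit cardinality `c`:
`e` has cardinality `c - 1` and is contained in some circuit. -/
def IsMS (c : ℕ) (C : Finset (Finset α)) (e : Finset α) : Prop :=
  e.card + 1 = c ∧ ∃ F ∈ C, e ⊆ F

/-- `e` is a simplicial maximal subcircuit: a maximal subcircuit whose closed
neighborhood is a clique. -/
def IsSMS (V : Finset α) (c : ℕ) (C : Finset (Finset α)) (e : Finset α) : Prop :=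
  IsMS c C e ∧ IsClique V c C (closedNbhd V C e)

/-- `e` is a free maximal subcircuit: contained in exactly one circuit. -/
def IsFreeMS (c : ℕ) (C : Finset (Finset α)) (e : Finset α) : Prop :=
  e.card + 1 = c ∧ ∃! F, F ∈ C ∧ e ⊆ F

/-- Deletion `C − e` of a maximal subcircuit: the circuits not containing `e`. -/
def delMS (C : Finset (Finset α)) (e : Finset α) : Finset (Finset α) :=
  C.filter fun F => ¬ e ⊆ F

/-- Deletion of a vertex: circuits (or faces) not containing `v`. -/
def delVert (C : Finset (Finset α)) (v : α) : Finset (Finset α) :=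
  C.filter fun F => v ∉ F

/-- Chordality of a uniform clutter (circuit cardinality `c`) on `V`: there is a sequence of
deletions of simplicial maximal subcircuits ending in the clutter with no circuits. -/
inductive Chordal (V : Finset α) (c : ℕ) : Finset (Finset α) → Prop
  | empty : Chordal V c ∅
  | step {C : Finset (Finset α)} (e : Finset α) :
      IsSMS V c C e → Chordal V c (delMS C e) → Chordal V c C

/-- The ascent `C⁺` of a clutter with circuit cardinality `c`: all `(c+1)`-subsets of `V`
that are cliques of `C`. -/
def ascent (V : Finset α) (c : ℕ) (C : Finset (Finset α)) : Finset (Finset α) :=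
  (V.powersetCard (c + 1)).filter fun A => A.powersetCard c ⊆ C

/-- The simplicial complex `⟨D⟩` generated by a clutter `D`: all subsets of its elements. -/
def complexOf (D : Finset (Finset α)) : Finset (Finset α) :=
  D.biUnion Finset.powerset

/-- A family of finsets is a simplicial complex if it is downward closed. -/
def IsComplex (Δ : Finset (Finset α)) : Prop :=
  ∀ F ∈ Δ, ∀ G ⊆ F, G ∈ Δ

/-- The facets (maximal faces) of a simplicial complex. -/
def facets (Δ : Finset (Finset α)) : Finset (Finset α) :=
  Δ.filter fun F => ∀ G ∈ Δ, F ⊆ G → F = G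

/-- `link_Δ(v) = { F \ {v} | v ∈ F ∈ Δ }`. -/
def link (Δ : Finset (Finset α)) (v : α) : Finset (Finset α) :=
  (Δ.filter fun F => v ∈ F).image fun F => F.erase v

/-- `v` is a shedding vertex of `Δ`: no face of `link_Δ(v)` is a facet of `Δ − v`. -/
def Shedding (Δ : Finset (Finset α)) (v : α) : Prop :=
  ∀ F ∈ link Δ v, F ∉ facets (delVert Δ v)

/-- Alexander dual of a simplicial complex on vertex set `V`:
`Δ^∨ = { V \ F | F ⊆ V, F ∉ Δ }`. -/
def alexDual (V : Finset α) (Δ : Finset (Finset α)) : Finset (Finset α) :=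
  (V.powerset.filter fun F => F ∉ Δ).image fun F => V \ F

/-- `Δ` is pure with all facets of cardinality `c` (dimension `c - 1`), and nonempty. -/
def PureDim (Δ : Finset (Finset α)) (c : ℕ) : Prop :=
  Δ.Nonempty ∧ ∀ F ∈ facets Δ, F.card = c

/-- Vertex decomposability of a simplicial complex. -/
inductive VDecomp : Finset (Finset α) → Prop
  | simplex {Δ : Finset (Finset α)} : (facets Δ).card = 1 → VDecomp Δ
  | shed {Δ : Finset (Finset α)} (v : α) : Shedding Δ v →
      VDecomp (link Δ v) → VDecomp (delVert Δ v) → VDecomp Δ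

/-- The vertex set of a clutter (or of the complex it generates). -/
def vertexSet (Ω : Finset (Finset α)) : Finset α :=
  Ω.biUnion id

/-- `Ω` (given by its set of facets, each of cardinality `d+1`) is a `d`-cycle:
nonempty, pure of dimension `d`, `d`-path connected, and every `(d-1)`-dimensional
face lies in an even number of `d`-faces. -/
def IsCycle (d : ℕ) (Ω : Finset (Finset α)) : Prop :=
  Ω.Nonempty ∧ (∀ F ∈ Ω, F.card = d + 1) ∧
    (∀ F ∈ Ω, ∀ G ∈ Ω,
      Relation.ReflTransGen (fun A B => A ∈ Ω ∧ B ∈ Ω ∧ (A ∩ B).card = d) F G) ∧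
    ∀ e : Finset α, e.card = d → Even ((Ω.filter fun F => e ⊆ F).card)

/-- A face-minimal `d`-cycle: no `d`-cycle has a strictly smaller set of `d`-faces. -/
def FaceMinimalCycle (d : ℕ) (Ω : Finset (Finset α)) : Prop :=
  IsCycle d Ω ∧ ∀ Ω' : Finset (Finset α), IsCycle d Ω' → Ω' ⊆ Ω → Ω' = Ω

/-- `Ω` is `d`-complete: it contains every `(d+1)`-subset of its vertex set. -/
def DComplete (d : ℕ) (Ω : Finset (Finset α)) : Prop :=
  ∀ F ⊆ vertexSet Ω, F.card = d + 1 → F ∈ Ω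

/-- The complex `⟨C⟩` generated by the `d`-dimensional clutter `C` is `d`-chorded. -/
def Chorded (d : ℕ) (C : Finset (Finset α)) : Prop :=
  ∀ Ω : Finset (Finset α), FaceMinimalCycle d Ω → Ω ⊆ C → ¬ DComplete d Ω →
    ∃ (k : ℕ) (Ωs : Fin k → Finset (Finset α)), 2 ≤ k ∧
      (∀ i, IsCycle d (Ωs i) ∧ Ωs i ⊆ C) ∧
      (∀ F ∈ Ω, ∃ i, F ∈ Ωs i) ∧
      (∀ F ∈ Ω, Odd ((Finset.univ.filter fun i => F ∈ Ωs i).card)) ∧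
      (∀ F : Finset α, (∃ i, F ∈ Ωs i) → F ∉ Ω →
        Even ((Finset.univ.filter fun i => F ∈ Ωs i).card)) ∧
      ∀ i, vertexSet (Ωs i) ⊂ vertexSet Ω

/-- The circuits of `D` admit an admissible order. -/
def HasAdmissibleOrder (D : Finset (Finset α)) : Prop :=
  ∃ (t : ℕ) (F : Fin t → Finset α), Function.Injective F ∧
    (∀ G, G ∈ D ↔ ∃ i, F i = G) ∧
    ∀ i j : Fin t, j < i →
      ∃ l ∈ F j \ F i, ∃ k : Fin t, k < i ∧ F k \ F i = {l}

/-- Contraction `D/v` of a (not necessarily uniform) clutter: the minimal sets of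
`{ e \ {v} | e ∈ D }`. -/
def contractAux (D : Finset (Finset α)) (v : α) : Finset (Finset α) :=
  D.image fun e => e.erase v

def contract (D : Finset (Finset α)) (v : α) : Finset (Finset α) :=
  (contractAux D v).filter fun e => ∀ f ∈ contractAux D v, f ⊆ e → f = e

/-- `D` has a simplicial vertex (trivially true if `D` has no vertices). -/
def HasSimpVertex (D : Finset (Finset α)) : Prop :=
  vertexSet D = ∅ ∨ ∃ v ∈ vertexSet D, ∀ e₁ ∈ D, ∀ e₂ ∈ D, v ∈ e₁ → v ∈ e₂ →
    ∃ e₃ ∈ D, e₃ ⊆ (e₁ ∪ e₂).erase v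

/-- `D` is W-chordal: every clutter obtained from `D` by a sequence of vertex deletions
and contractions has a simplicial vertex. -/
def WChordal (D : Finset (Finset α)) : Prop :=
  ∀ D' : Finset (Finset α),
    Relation.ReflTransGen (fun X Y => ∃ v, Y = delVert X v ∨ Y = contract X v) D D' →
    HasSimpVertex D'


section Helpers

lemma exists_facet {Δ : Finset (Finset α)} {F : Finset α} (hF : F ∈ Δ) :
    ∃ G ∈ facets Δ, F ⊆ G := by
  obtain ⟨H, hH, hmax⟩ := Finset.exists_max_image (Δ.filter fun G => F ⊆ G) Finset.card
    ⟨F, by simp [hF]⟩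
  rw [Finset.mem_filter] at hH
  refine ⟨H, Finset.mem_filter.2 ⟨hH.1, fun G hG hHG => ?_⟩, hH.2⟩
  exact Finset.eq_of_subset_of_card_le hHG
    (hmax G (Finset.mem_filter.2 ⟨hG, hH.2.trans hHG⟩))

lemma chordal_lift (V : Finset α) (v : α) (c : ℕ) :
    ∀ X : Finset (Finset α), Chordal (V.erase v) c X → (∀ F ∈ X, v ∉ F) →
      Chordal V c X := by
  intro X hX
  induction hX with
  | empty => intro _; exact Chordal.empty
  | @step X e hS hCd ih =>
    intro hv
    have hvnot : ∀ w, insert w e ∈ X → w ≠ v := by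
      intro w hw hwv
      exact hv _ hw (hwv ▸ Finset.mem_insert_self _ _)
    have hNeq : closedNbhd V X e = closedNbhd (V.erase v) X e := by
      unfold closedNbhd
      congr 1
      ext w
      simp only [Finset.mem_filter, Finset.mem_erase]
      constructor
      · rintro ⟨h1, h2⟩; exact ⟨⟨hvnot w h2, h1⟩, h2⟩
      · rintro ⟨⟨_, h1⟩, h2⟩; exact ⟨h1, h2⟩
    refine Chordal.step e ⟨hS.1, ?_⟩ (ih fun F hF => hv F (Finset.mem_filter.1 hF).1)
    rw [hNeq]
    exact ⟨(hS.2.1).trans (Finset.erase_subset _ _), hS.2.2⟩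

lemma chordal_one (V : Finset α) (C : Finset (Finset α)) (hC : IsClutter V 1 C) :
    Chordal V 1 C := by
  rcases C.eq_empty_or_nonempty with rfl | ⟨F, hF⟩
  · exact Chordal.empty
  · refine Chordal.step ∅ ⟨⟨by simp, F, hF, Finset.empty_subset _⟩, ?_, ?_⟩ ?_
    · unfold closedNbhd
      simp only [Finset.empty_union]
      exact Finset.filter_subset _ _
    · intro B hB hBcard
      obtain ⟨w, rfl⟩ := Finset.card_eq_one.1 hBcard
      have := hB (Finset.mem_singleton_self w)
      unfold closedNbhd at this
      simp only [Finset.empty_union, Finset.mem_filter] at this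
      simpa using this.2
    · have : delMS C ∅ = ∅ := by
        unfold delMS
        simp
      rw [this]; exact Chordal.empty

lemma VD_nonempty {Δ : Finset (Finset α)} (h : VDecomp Δ) : Δ.Nonempty := by
  induction h with
  | simplex h =>
    have : (facets _).Nonempty := Finset.card_pos.1 (h ▸ one_pos)
    obtain ⟨F, hF⟩ := this
    exact ⟨F, (Finset.mem_filter.1 hF).1⟩
  | shed v hs hl hd ihl ihd =>
    obtain ⟨H, hH⟩ := ihl
    obtain ⟨K, hK, -⟩ := Finset.mem_image.1 hH
    exact ⟨K, (Finset.mem_filter.1 hK).1⟩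

def lkC (C : Finset (Finset α)) (v : α) : Finset (Finset α) :=
  (C.filter fun F => v ∈ F).image fun F => F.erase v

lemma mem_lkC {C : Finset (Finset α)} {v : α} {G : Finset α} :
    G ∈ lkC C v ↔ ∃ F ∈ C, v ∈ F ∧ G = F.erase v := by
  simp only [lkC, Finset.mem_image, Finset.mem_filter]
  constructor
  · rintro ⟨F, ⟨h1, h2⟩, h3⟩; exact ⟨F, h1, h2, h3.symm⟩
  · rintro ⟨F, h1, h2, h3⟩; exact ⟨F, ⟨h1, h2⟩, h3.symm⟩

lemma mem_lkC' {C : Finset (Finset α)} {v : α} {G : Finset α} (hv : v ∉ G) :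
    G ∈ lkC C v ↔ insert v G ∈ C := by
  rw [mem_lkC]
  constructor
  · rintro ⟨F, h1, h2, rfl⟩; rwa [Finset.insert_erase h2]
  · intro h; exact ⟨insert v G, h, Finset.mem_insert_self _ _, by rw [Finset.erase_insert hv]⟩

lemma glue (V : Finset α) (v : α) (hv : v ∈ V) (c : ℕ) :
    ∀ D : Finset (Finset α), Chordal (V.erase v) c D →
    ∀ C : Finset (Finset α), IsClutter V (c + 1) C →
    (∀ F ⊆ V, F.card = c + 1 → v ∉ F →
      (∀ x ∈ F, insert v (F.erase x) ∈ C) → F ∈ C) →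
    lkC C v = D → Chordal (V.erase v) (c + 1) (delVert C v) →
    Chordal V (c + 1) C := by
  intro D hD
  induction hD with
  | empty =>
    intro C hC hex hlk hdel
    have hCv : ∀ F ∈ C, v ∉ F := by
      intro F hF hvF
      have : F.erase v ∈ lkC C v := mem_lkC.2 ⟨F, hF, hvF, rfl⟩
      rw [hlk] at this
      exact absurd this (Finset.notMem_empty _)
    have : delVert C v = C := by
      unfold delVert
      exact Finset.filter_true_of_mem hCv
    rw [this] at hdel
    exact chordal_lift V v (c + 1) C hdel hCv
  | @step D e hS hCd ih =>
    intro C hC hex hlk hdel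
    subst hlk
    -- basic facts about e
    obtain ⟨⟨hecard, G, hG, heG⟩, hclq⟩ := hS
    obtain ⟨F₀, hF₀C, hvF₀, rfl⟩ := mem_lkC.1 hG
    have heV' : e ⊆ V.erase v := heG.trans
      (Finset.erase_subset_erase v (hC F₀ hF₀C).1)
    have hve : v ∉ e := fun h => (Finset.mem_erase.1 (heV' h)).1 rfl
    set ev := insert v e with hevdef
    have hevcard : ev.card + 1 = c + 1 := by
      rw [Finset.card_insert_of_notMem hve]; omega
    have hevF₀ : ev ⊆ F₀ := Finset.insert_subset hvF₀
      (heG.trans (Finset.erase_subset _ _))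
    -- closed neighborhoods
    set A := closedNbhd (V.erase v) (lkC C v) e with hA
    have hvA : v ∉ A := by
      intro h
      rcases Finset.mem_union.1 h with h | h
      · exact hve h
      · exact (Finset.mem_erase.1 (Finset.mem_filter.1 h).1).1 rfl
    have hAV' : A ⊆ V.erase v := Finset.union_subset heV' (Finset.filter_subset _ _)
    have hN : closedNbhd V C ev = insert v A := by
      ext w
      by_cases hwv : w = v
      · subst hwv
        simp only [Finset.mem_insert, closedNbhd, Finset.mem_union, hevdef]
        simp
      · have hkey : ∀ _ : w ∉ e, (insert w ev ∈ C ↔ insert w e ∈ lkC C v) := by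
          intro hwe
          rw [mem_lkC' (by simp only [Finset.mem_insert]; push_neg; exact ⟨Ne.symm hwv, hve⟩)]
          have : insert v (insert w e) = insert w ev := by
            rw [hevdef, Finset.insert_comm]
          rw [this]
        simp only [closedNbhd, Finset.mem_union, Finset.mem_insert, hA,
          Finset.mem_filter, Finset.mem_erase, hevdef]
        constructor
        · rintro (h | h)
          · rcases h with h' | h'
            · exact absurd h' hwv
            · exact Or.inr (Or.inl h')
          · rcases h with ⟨hwV, hins⟩
            by_cases hwe : w ∈ e
            · exact Or.inr (Or.inl hwe)
            · exact Or.inr (Or.inr ⟨⟨hwv, hwV⟩, (hkey hwe).1 hins⟩)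
        · rintro (h | h | h)
          · exact absurd h hwv
          · exact Or.inl (Or.inr h)
          · rcases h with ⟨⟨hwv', hwV⟩, hins⟩
            by_cases hwe : w ∈ e
            · exact Or.inl (Or.inr hwe)
            · exact Or.inr ⟨hwV, (hkey hwe).2 hins⟩
    -- the SMS property of ev in C
    have hclq2 : IsClique V (c + 1) C (closedNbhd V C ev) := by
      rw [hN]
      constructor
      · exact Finset.insert_subset hv (hAV'.trans (Finset.erase_subset _ _))
      · intro B hB hBcard
        by_cases hvB : v ∈ B
        · have hB' : B.erase v ⊆ A := by
            intro x hx
            rcases Finset.mem_erase.1 hx with ⟨hxv, hxB⟩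
            rcases Finset.mem_insert.1 (hB hxB) with h | h
            · exact absurd h hxv
            · exact h
          have hB'card : (B.erase v).card = c := by
            rw [Finset.card_erase_of_mem hvB, hBcard]; omega
          have : B.erase v ∈ lkC C v := hclq.2 _ hB' hB'card
          rw [mem_lkC' (Finset.notMem_erase _ _)] at this
          rwa [Finset.insert_erase hvB] at this
        · have hBA : B ⊆ A := fun x hx => by
            rcases Finset.mem_insert.1 (hB hx) with h | h
            · exact absurd (h ▸ hx) hvB
            · exact h
          refine hex B (hBA.trans (hAV'.trans (Finset.erase_subset _ _))) hBcard hvB ?_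
          intro x hxB
          have h1 : B.erase x ⊆ A := (Finset.erase_subset _ _).trans hBA
          have h2 : (B.erase x).card = c := by
            rw [Finset.card_erase_of_mem hxB, hBcard]; omega
          have : B.erase x ∈ lkC C v := hclq.2 _ h1 h2
          rwa [mem_lkC' (fun h => hvB (Finset.mem_of_mem_erase h))] at this
    refine Chordal.step ev ⟨⟨hevcard, F₀, hF₀C, hevF₀⟩, hclq2⟩ ?_
    -- apply the induction hypothesis to C - ev
    refine ih (delMS C ev) (fun F hF => hC F (Finset.mem_filter.1 hF).1) ?_ ?_ ?_
    · -- exchange property persists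
      intro F hFV hFcard hvF hall
      have hmem : F ∈ C := hex F hFV hFcard hvF
        (fun x hx => (Finset.mem_filter.1 (hall x hx)).1)
      refine Finset.mem_filter.2 ⟨hmem, fun hsub => hvF (hsub (Finset.mem_insert_self _ _))⟩
    · -- link of the deletion
      ext G
      rw [mem_lkC]
      simp only [delMS, Finset.mem_filter]
      constructor
      · rintro ⟨F, ⟨hFC, hFnot⟩, hvF, rfl⟩
        refine ⟨mem_lkC.2 ⟨F, hFC, hvF, rfl⟩, fun hsub => hFnot ?_⟩
        rw [hevdef]
        exact Finset.insert_subset hvF (hsub.trans (Finset.erase_subset _ _))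
      · rintro ⟨hG, hnot⟩
        obtain ⟨F, hFC, hvF, rfl⟩ := mem_lkC.1 hG
        refine ⟨F, ⟨hFC, fun hsub => hnot ?_⟩, hvF, rfl⟩
        intro x hx
        refine Finset.mem_erase.2 ⟨fun hxv => hve (hxv ▸ hx), hsub ?_⟩
        rw [hevdef]
        exact Finset.mem_insert_of_mem hx
    · -- vertex-deletion unchanged
      have : delVert (delMS C ev) v = delVert C v := by
        ext F
        simp only [delVert, delMS, Finset.mem_filter]
        constructor
        · rintro ⟨⟨h1, h2⟩, h3⟩; exact ⟨h1, h3⟩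
        · rintro ⟨h1, h3⟩
          exact ⟨⟨h1, fun hsub => h3 (hsub (hevdef ▸ Finset.mem_insert_self _ _))⟩, h3⟩
      rw [this]
      exact hdel

lemma chordal_complete_aux (n : ℕ) : ∀ V : Finset α, V.card ≤ n → ∀ c : ℕ,
    Chordal V (c + 1) (V.powersetCard (c + 1)) := by
  induction n with
  | zero =>
    intro V hV c
    have hVe : V = ∅ := Finset.card_eq_zero.1 (Nat.le_antisymm hV (Nat.zero_le _))
    subst hVe
    have : (∅ : Finset α).powersetCard (c + 1) = ∅ := by
      apply Finset.powersetCard_eq_empty.2; simp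
    rw [this]; exact Chordal.empty
  | succ n ih =>
    intro V hV c
    have hclut : IsClutter V (c + 1) (V.powersetCard (c + 1)) := fun F hF => by
      rw [Finset.mem_powersetCard] at hF; exact hF
    cases c with
    | zero => exact chordal_one V _ hclut
    | succ c' =>
      rcases V.eq_empty_or_nonempty with rfl | ⟨v, hv⟩
      · have : (∅ : Finset α).powersetCard (c' + 2) = ∅ := by
          apply Finset.powersetCard_eq_empty.2; simp
        rw [this]; exact Chordal.empty
      · have hcard' : (V.erase v).card ≤ n := by
          rw [Finset.card_erase_of_mem hv]; omega
        refine glue V v hv (c' + 1) (lkC (V.powersetCard (c' + 2)) v) ?_ _ hclut ?_ rfl ?_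
        · have hlk : lkC (V.powersetCard (c' + 2)) v = (V.erase v).powersetCard (c' + 1) := by
            ext G
            rw [mem_lkC, Finset.mem_powersetCard]
            constructor
            · rintro ⟨F, hF, hvF, rfl⟩
              rw [Finset.mem_powersetCard] at hF
              exact ⟨Finset.erase_subset_erase v hF.1,
                by rw [Finset.card_erase_of_mem hvF, hF.2]; omega⟩
            · rintro ⟨hGV, hGcard⟩
              have hvG : v ∉ G := fun h => (Finset.mem_erase.1 (hGV h)).1 rfl
              refine ⟨insert v G, Finset.mem_powersetCard.2
                ⟨Finset.insert_subset hv (hGV.trans (Finset.erase_subset _ _)),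
                 by rw [Finset.card_insert_of_notMem hvG, hGcard]⟩,
                Finset.mem_insert_self _ _, by rw [Finset.erase_insert hvG]⟩
          rw [hlk]
          exact ih (V.erase v) hcard' c'
        · intro F hFV hFcard _ _
          exact Finset.mem_powersetCard.2 ⟨hFV, hFcard⟩
        · have hdel : delVert (V.powersetCard (c' + 2)) v
              = (V.erase v).powersetCard (c' + 2) := by
            ext F
            simp only [delVert, Finset.mem_filter, Finset.mem_powersetCard]
            constructor
            · rintro ⟨⟨h1, h2⟩, h3⟩
              exact ⟨Finset.subset_erase.2 ⟨h1, h3⟩, h2⟩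
            · rintro ⟨h1, h2⟩
              rcases Finset.subset_erase.1 h1 with ⟨h3, h4⟩
              exact ⟨⟨h3, h2⟩, h4⟩
          rw [hdel]
          exact ih (V.erase v) hcard' (c' + 1)

lemma chordal_complete (V : Finset α) (c : ℕ) :
    Chordal V (c + 1) (V.powersetCard (c + 1)) :=
  chordal_complete_aux V.card V le_rfl c

lemma chordal_complete_sub (n : ℕ) : ∀ V : Finset α, V.card ≤ n →
    ∀ (c : ℕ) (F₀ : Finset α), F₀ ⊆ V → F₀.card = c + 1 →
    Chordal V (c + 1) (V.powersetCard (c + 1) \ {F₀}) := by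
  induction n with
  | zero =>
    intro V hV c F₀ hF₀V hF₀card
    have hVe : V = ∅ := Finset.card_eq_zero.1 (Nat.le_antisymm hV (Nat.zero_le _))
    subst hVe
    have : (∅ : Finset α).powersetCard (c + 1) = ∅ := by
      apply Finset.powersetCard_eq_empty.2; simp
    rw [this, Finset.empty_sdiff]; exact Chordal.empty
  | succ n ih =>
    intro V hV c F₀ hF₀V hF₀card
    have hclut : IsClutter V (c + 1) (V.powersetCard (c + 1) \ {F₀}) := fun F hF => by
      have := (Finset.mem_sdiff.1 hF).1
      rw [Finset.mem_powersetCard] at this; exact this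
    cases c with
    | zero => exact chordal_one V _ hclut
    | succ c' =>
      have hvF₀ : ∃ v, v ∈ F₀ := Finset.Nonempty.exists_mem
        (Finset.card_pos.1 (by omega))
      obtain ⟨v, hvF₀⟩ := hvF₀
      have hv : v ∈ V := hF₀V hvF₀
      have hcard' : (V.erase v).card ≤ n := by
        rw [Finset.card_erase_of_mem hv]; omega
      refine glue V v hv (c' + 1) (lkC (V.powersetCard (c' + 2) \ {F₀}) v) ?_ _ hclut ?_ rfl ?_
      · have hlk : lkC (V.powersetCard (c' + 2) \ {F₀}) v
            = (V.erase v).powersetCard (c' + 1) \ {F₀.erase v} := by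
          ext G
          rw [mem_lkC]
          simp only [Finset.mem_sdiff, Finset.mem_powersetCard, Finset.mem_singleton]
          constructor
          · rintro ⟨F, ⟨⟨hFV, hFcard⟩, hFne⟩, hvF, rfl⟩
            refine ⟨⟨Finset.erase_subset_erase v hFV,
              by rw [Finset.card_erase_of_mem hvF, hFcard]; omega⟩, fun hEq => hFne ?_⟩
            rw [← Finset.insert_erase hvF, ← Finset.insert_erase hvF₀, hEq]
          · rintro ⟨⟨hGV, hGcard⟩, hGne⟩
            have hvG : v ∉ G := fun h => (Finset.mem_erase.1 (hGV h)).1 rfl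
            refine ⟨insert v G, ⟨⟨Finset.insert_subset hv
              (hGV.trans (Finset.erase_subset _ _)),
              by rw [Finset.card_insert_of_notMem hvG, hGcard]⟩, fun hEq => hGne ?_⟩,
              Finset.mem_insert_self _ _, by rw [Finset.erase_insert hvG]⟩
            rw [← hEq, Finset.erase_insert hvG]
        rw [hlk]
        exact ih (V.erase v) hcard' c' (F₀.erase v)
          (Finset.erase_subset_erase v hF₀V)
          (by rw [Finset.card_erase_of_mem hvF₀, hF₀card]; omega)
      · intro F hFV hFcard hvnF _
        refine Finset.mem_sdiff.2 ⟨Finset.mem_powersetCard.2 ⟨hFV, hFcard⟩, ?_⟩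
        rw [Finset.mem_singleton]
        rintro rfl
        exact hvnF hvF₀
      · have hdel : delVert (V.powersetCard (c' + 2) \ {F₀}) v
            = (V.erase v).powersetCard (c' + 2) := by
          ext F
          simp only [delVert, Finset.mem_filter, Finset.mem_sdiff,
            Finset.mem_powersetCard, Finset.mem_singleton]
          constructor
          · rintro ⟨⟨⟨h1, h2⟩, _⟩, h3⟩
            exact ⟨Finset.subset_erase.2 ⟨h1, h3⟩, h2⟩
          · rintro ⟨h1, h2⟩
            rcases Finset.subset_erase.1 h1 with ⟨h3, h4⟩
            exact ⟨⟨⟨h3, h2⟩, fun hEq => h4 (hEq ▸ hvF₀)⟩, h4⟩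
        rw [hdel]
        exact chordal_complete (V.erase v) (c' + 1)

lemma mem_complexOf {D : Finset (Finset α)} {F : Finset α} :
    F ∈ complexOf D ↔ ∃ G ∈ D, F ⊆ G := by
  simp [complexOf]

lemma mem_clutterDual {V : Finset α} {c : ℕ} {C : Finset (Finset α)} {G : Finset α} :
    G ∈ clutterDual V c C ↔ ∃ F, F ⊆ V ∧ F.card = c ∧ F ∉ C ∧ G = V \ F := by
  simp only [clutterDual, compClutter, Finset.mem_image, Finset.mem_sdiff,
    Finset.mem_powersetCard]
  constructor
  · rintro ⟨F, ⟨⟨h1, h2⟩, h3⟩, h4⟩; exact ⟨F, h1, h2, h3, h4.symm⟩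
  · rintro ⟨F, h1, h2, h3, h4⟩; exact ⟨F, ⟨⟨h1, h2⟩, h3⟩, h4.symm⟩

lemma link_eq_lkC (Δ : Finset (Finset α)) (v : α) : link Δ v = lkC Δ v := rfl

lemma mem_dualComplex {V : Finset α} {c : ℕ} {C : Finset (Finset α)} {G : Finset α} :
    G ∈ complexOf (clutterDual V c C) ↔
      ∃ F, F ⊆ V ∧ F.card = c ∧ F ∉ C ∧ G ⊆ V \ F := by
  rw [mem_complexOf]
  constructor
  · rintro ⟨H, hH, hGH⟩
    obtain ⟨F, h1, h2, h3, rfl⟩ := mem_clutterDual.1 hH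
    exact ⟨F, h1, h2, h3, hGH⟩
  · rintro ⟨F, h1, h2, h3, h4⟩
    exact ⟨V \ F, mem_clutterDual.2 ⟨F, h1, h2, h3, rfl⟩, h4⟩

lemma sdiff_insert_eq {V F : Finset α} {v : α} (_ : v ∉ F) :
    V.erase v \ F = V \ insert v F := by
  ext x
  simp only [Finset.mem_sdiff, Finset.mem_erase, Finset.mem_insert]
  tauto

lemma main_aux : ∀ Δ : Finset (Finset α), VDecomp Δ →
    ∀ (V : Finset α) (c : ℕ) (C : Finset (Finset α)), IsClutter V c C →
      complexOf (clutterDual V c C) = Δ → Chordal V c C := by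
  intro Δ h
  induction h with
  | @simplex Δ hfac =>
    intro V c C hC hΔ
    -- the facets of Δ are exactly the complements of the members of `compClutter`
    have hSsub : ∀ F ∈ compClutter V c C, F ⊆ V ∧ F.card = c ∧ F ∉ C := by
      intro F hF
      rcases Finset.mem_sdiff.1 hF with ⟨h1, h2⟩
      rcases Finset.mem_powersetCard.1 h1 with ⟨h3, h4⟩
      exact ⟨h3, h4, h2⟩
    have hgen : ∀ F ∈ compClutter V c C, V \ F ∈ Δ := by
      intro F hF
      rw [← hΔ]
      exact mem_dualComplex.2 ⟨F, (hSsub F hF).1, (hSsub F hF).2.1, (hSsub F hF).2.2,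
        Finset.Subset.refl _⟩
    have hface : ∀ G ∈ Δ, ∃ F ∈ compClutter V c C, G ⊆ V \ F := by
      intro G hG
      rw [← hΔ] at hG
      obtain ⟨F, h1, h2, h3, h4⟩ := mem_dualComplex.1 hG
      exact ⟨F, Finset.mem_sdiff.2 ⟨Finset.mem_powersetCard.2 ⟨h1, h2⟩, h3⟩, h4⟩
    have hcompl_max : ∀ F ∈ compClutter V c C, ∀ G ∈ Δ, V \ F ⊆ G → V \ F = G := by
      intro F hF G hG hsub
      obtain ⟨F', hF', hGF'⟩ := hface G hG
      have hsub2 : V \ F ⊆ V \ F' := hsub.trans hGF'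
      have hF'F : F' ⊆ F := by
        intro x hx
        by_contra hxF
        have : x ∈ V \ F := Finset.mem_sdiff.2 ⟨(hSsub F' hF').1 hx, hxF⟩
        exact (Finset.mem_sdiff.1 (hsub2 this)).2 hx
      have : F' = F := Finset.eq_of_subset_of_card_le hF'F
        (by rw [(hSsub F hF).2.1, (hSsub F' hF').2.1])
      subst this
      exact Finset.Subset.antisymm hsub (hGF'.trans hsub2)
    have hfacets : facets Δ = (compClutter V c C).image fun F => V \ F := by
      ext H
      simp only [facets, Finset.mem_filter, Finset.mem_image]
      constructor
      · rintro ⟨hHΔ, hmax⟩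
        obtain ⟨F, hF, hHF⟩ := hface H hHΔ
        have := hmax (V \ F) (hgen F hF) hHF
        exact ⟨F, hF, this.symm⟩
      · rintro ⟨F, hF, rfl⟩
        exact ⟨hgen F hF, hcompl_max F hF⟩
    have hinj : Set.InjOn (fun F => V \ F) (compClutter V c C) := by
      intro F hF F' hF' hEq
      have h1 := Finset.sdiff_sdiff_eq_self (hSsub F hF).1
      have h2 := Finset.sdiff_sdiff_eq_self (hSsub F' (by exact hF')).1
      rw [← h1, ← h2]
      simp only at hEq
      rw [hEq]
    have hScard : (compClutter V c C).card = 1 := by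
      rw [← Finset.card_image_of_injOn hinj, ← hfacets, hfac]
    obtain ⟨F₀, hS⟩ := Finset.card_eq_one.1 hScard
    have hF₀ : F₀ ⊆ V ∧ F₀.card = c ∧ F₀ ∉ C := hSsub F₀ (hS ▸ Finset.mem_singleton_self F₀)
    have hCeq : C = V.powersetCard c \ {F₀} := by
      ext F
      simp only [Finset.mem_sdiff, Finset.mem_powersetCard, Finset.mem_singleton]
      constructor
      · intro hFC
        refine ⟨⟨(hC F hFC).1, (hC F hFC).2⟩, ?_⟩
        rintro rfl
        exact hF₀.2.2 hFC
      · rintro ⟨⟨h1, h2⟩, h3⟩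
        by_contra hFC
        have : F ∈ compClutter V c C :=
          Finset.mem_sdiff.2 ⟨Finset.mem_powersetCard.2 ⟨h1, h2⟩, hFC⟩
        rw [hS, Finset.mem_singleton] at this
        exact h3 this
    cases c with
    | zero =>
      have hF₀e : F₀ = ∅ := Finset.card_eq_zero.1 hF₀.2.1
      have : C = ∅ := by
        rw [hCeq, hF₀e]
        ext F
        simp only [Finset.mem_sdiff, Finset.mem_powersetCard, Finset.mem_singleton,
          Finset.notMem_empty, iff_false]
        rintro ⟨⟨-, h2⟩, h3⟩
        exact h3 (Finset.card_eq_zero.1 h2)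
      rw [this]; exact Chordal.empty
    | succ c' =>
      rw [hCeq]
      exact chordal_complete_sub V.card V le_rfl c' F₀ hF₀.1 hF₀.2.1
  | @shed Δ v hshed hlk hdel ihlk ihdel =>
    intro V c C hC hΔ
    rcases C.eq_empty_or_nonempty with rfl | hCne
    · exact Chordal.empty
    cases c with
    | zero =>
      -- C = {∅}, so Δ = ∅, contradicting vertex decomposability of Δ - v
      exfalso
      have hCeq : C = {∅} := by
        ext F
        simp only [Finset.mem_singleton]
        constructor
        · intro hF; exact Finset.card_eq_zero.1 (hC F hF).2
        · rintro rfl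
          obtain ⟨F, hF⟩ := hCne
          have := Finset.card_eq_zero.1 (hC F hF).2
          rwa [this] at hF
      have hΔe : Δ = ∅ := by
        rw [← hΔ]
        ext G
        simp only [Finset.notMem_empty, iff_false]
        intro hG
        obtain ⟨F, -, h2, h3, -⟩ := mem_dualComplex.1 hG
        rw [Finset.card_eq_zero.1 h2, hCeq] at h3
        exact h3 (Finset.mem_singleton_self _)
      have : delVert Δ v = ∅ := by rw [hΔe]; rfl
      obtain ⟨x, hx⟩ := VD_nonempty hdel
      rw [this] at hx
      exact Finset.notMem_empty x hx
    | succ c' =>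
      by_cases hfix : delVert Δ v = Δ
      · exact ihdel V (c' + 1) C hC (hΔ.trans hfix.symm)
      · -- there is a face containing v, hence v ∈ V
        have hKex : ∃ K ∈ Δ, v ∈ K := by
          by_contra hcon
          push_neg at hcon
          exact hfix (Finset.filter_true_of_mem fun F hF => hcon F hF)
        obtain ⟨K, hKΔ, hvK⟩ := hKex
        have hvV : v ∈ V := by
          rw [← hΔ] at hKΔ
          obtain ⟨F, -, -, -, h4⟩ := mem_dualComplex.1 hKΔ
          exact (Finset.mem_sdiff.1 (h4 hvK)).1
        -- identity for the link of Δ at v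
        have hlkid : complexOf (clutterDual (V.erase v) (c' + 1) (delVert C v)) = link Δ v := by
          ext G
          rw [mem_dualComplex, link_eq_lkC, mem_lkC]
          constructor
          · rintro ⟨F, hFV', hFcard, hFCd, hGF⟩
            have hvF : v ∉ F := fun h => (Finset.mem_erase.1 (hFV' h)).1 rfl
            have hFC : F ∉ C := by
              intro h
              exact hFCd (Finset.mem_filter.2 ⟨h, hvF⟩)
            have hvG : v ∉ G := fun h => (Finset.mem_erase.1 (Finset.mem_sdiff.1 (hGF h)).1).1 rfl
            refine ⟨insert v G, ?_, Finset.mem_insert_self _ _, (Finset.erase_insert hvG).symm⟩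
            rw [← hΔ]
            refine mem_dualComplex.2 ⟨F, hFV'.trans (Finset.erase_subset _ _), hFcard, hFC, ?_⟩
            refine Finset.insert_subset (Finset.mem_sdiff.2 ⟨hvV, hvF⟩) ?_
            exact hGF.trans ((Finset.sdiff_subset_sdiff (Finset.erase_subset _ _) (Finset.Subset.refl _)))
          · rintro ⟨K, hKΔ2, hvK2, rfl⟩
            rw [← hΔ] at hKΔ2
            obtain ⟨F, hFV, hFcard, hFC, hKF⟩ := mem_dualComplex.1 hKΔ2
            have hvF : v ∉ F := (Finset.mem_sdiff.1 (hKF hvK2)).2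
            refine ⟨F, Finset.subset_erase.2 ⟨hFV, hvF⟩, hFcard,
              fun h => hFC (Finset.mem_filter.1 h).1, ?_⟩
            intro x hx
            rcases Finset.mem_erase.1 hx with ⟨hxv, hxK⟩
            rcases Finset.mem_sdiff.1 (hKF hxK) with ⟨hxV, hxF⟩
            exact Finset.mem_sdiff.2 ⟨Finset.mem_erase.2 ⟨hxv, hxV⟩, hxF⟩
        -- identity for the deletion of v from Δ
        have hdelid : complexOf (clutterDual (V.erase v) c' (lkC C v)) = delVert Δ v := by
          ext G
          rw [mem_dualComplex]
          constructor
          · rintro ⟨F', hF'V', hF'card, hF'D, hGF'⟩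
            have hvF' : v ∉ F' := fun h => (Finset.mem_erase.1 (hF'V' h)).1 rfl
            have hins : insert v F' ∉ C := by
              intro h
              exact hF'D (mem_lkC.2 ⟨insert v F', h, Finset.mem_insert_self _ _,
                (Finset.erase_insert hvF').symm⟩)
            have hGΔ : G ∈ Δ := by
              rw [← hΔ]
              refine mem_dualComplex.2 ⟨insert v F',
                Finset.insert_subset hvV (hF'V'.trans (Finset.erase_subset _ _)),
                by rw [Finset.card_insert_of_notMem hvF', hF'card], hins, ?_⟩
              rwa [← sdiff_insert_eq hvF']
            have hvG : v ∉ G := fun h => (Finset.mem_erase.1 (Finset.mem_sdiff.1 (hGF' h)).1).1 rfl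
            exact Finset.mem_filter.2 ⟨hGΔ, hvG⟩
          · intro hG
            obtain ⟨H, hHfac, hGH⟩ := exists_facet hG
            have hHmem := (Finset.mem_filter.1 hHfac).1
            rcases Finset.mem_filter.1 hHmem with ⟨hHΔ, hvH⟩
            have hHΔ' := hHΔ
            rw [← hΔ] at hHΔ'
            obtain ⟨F₁, hF₁V, hF₁card, hF₁C, hHF₁⟩ := mem_dualComplex.1 hHΔ'
            by_cases hvF₁ : v ∈ F₁
            · refine ⟨F₁.erase v, Finset.erase_subset_erase v hF₁V,
                by rw [Finset.card_erase_of_mem hvF₁, hF₁card]; omega, ?_, ?_⟩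
              · intro hmem
                obtain ⟨F, hFC, hvF, hEq⟩ := mem_lkC.1 hmem
                have : F = F₁ := by
                  rw [← Finset.insert_erase hvF, ← hEq, Finset.insert_erase hvF₁]
                exact hF₁C (this ▸ hFC)
              · have : V \ F₁ = V.erase v \ F₁.erase v := by
                  rw [sdiff_insert_eq (Finset.notMem_erase v F₁), Finset.insert_erase hvF₁]
                rw [← this]
                exact hGH.trans hHF₁
            · exfalso
              have hHlink : H ∈ link Δ v := by
                rw [link_eq_lkC, mem_lkC]
                refine ⟨insert v H, ?_, Finset.mem_insert_self _ _,
                  (Finset.erase_insert hvH).symm⟩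
                rw [← hΔ]
                exact mem_dualComplex.2 ⟨F₁, hF₁V, hF₁card, hF₁C,
                  Finset.insert_subset (Finset.mem_sdiff.2 ⟨hvV, hvF₁⟩) hHF₁⟩
              exact hshed H hHlink hHfac
        -- exchange property from the shedding hypothesis
        have hex : ∀ F ⊆ V, F.card = c' + 1 → v ∉ F →
            (∀ x ∈ F, insert v (F.erase x) ∈ C) → F ∈ C := by
          intro F hFV hFcard hvnF hall
          by_contra hFC
          have hVFΔ : V \ F ∈ Δ := by
            rw [← hΔ]
            exact mem_dualComplex.2 ⟨F, hFV, hFcard, hFC, Finset.Subset.refl _⟩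
          have hvVF : v ∈ V \ F := Finset.mem_sdiff.2 ⟨hvV, hvnF⟩
          set W := (V \ F).erase v with hW
          have hWlink : W ∈ link Δ v := by
            rw [link_eq_lkC, mem_lkC]
            exact ⟨V \ F, hVFΔ, hvVF, rfl⟩
          have hWdel : W ∈ delVert Δ v := by
            refine Finset.mem_filter.2 ⟨?_, Finset.notMem_erase _ _⟩
            rw [← hΔ]
            exact mem_dualComplex.2 ⟨F, hFV, hFcard, hFC, Finset.erase_subset _ _⟩
          have hnotfac := hshed W hWlink
          have : ¬ ∀ G ∈ delVert Δ v, W ⊆ G → W = G := by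
            intro hcon
            exact hnotfac (Finset.mem_filter.2 ⟨hWdel, hcon⟩)
          push_neg at this
          obtain ⟨G, hGdel, hWG, hWne⟩ := this
          rcases Finset.mem_filter.1 hGdel with ⟨hGΔ, hvG⟩
          rw [← hΔ] at hGΔ
          obtain ⟨F₂, hF₂V, hF₂card, hF₂C, hGF₂⟩ := mem_dualComplex.1 hGΔ
          obtain ⟨u, huG, huW⟩ := Finset.exists_of_ssubset (hWG.ssubset_of_ne hWne)
          have huV : u ∈ V := (Finset.mem_sdiff.1 (hGF₂ huG)).1
          have huF₂ : u ∉ F₂ := (Finset.mem_sdiff.1 (hGF₂ huG)).2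
          have huv : u ≠ v := fun h => hvG (h ▸ huG)
          have huF : u ∈ F := by
            by_contra huF
            exact huW (Finset.mem_erase.2 ⟨huv, Finset.mem_sdiff.2 ⟨huV, huF⟩⟩)
          have hF₂sub : F₂ ⊆ insert v F := by
            intro x hxF₂
            by_contra hx
            rw [Finset.mem_insert] at hx
            push_neg at hx
            have hxW : x ∈ W := Finset.mem_erase.2 ⟨hx.1,
              Finset.mem_sdiff.2 ⟨hF₂V hxF₂, hx.2⟩⟩
            exact (Finset.mem_sdiff.1 (hGF₂ (hWG hxW))).2 hxF₂
          have hF₂sub' : F₂ ⊆ (insert v F).erase u :=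
            fun x hx => Finset.mem_erase.2 ⟨fun h => huF₂ (h ▸ hx), hF₂sub hx⟩
          have hcard2 : ((insert v F).erase u).card = c' + 1 := by
            rw [Finset.card_erase_of_mem (Finset.mem_insert_of_mem huF),
              Finset.card_insert_of_notMem hvnF, hFcard]
            omega
          have hF₂eq : F₂ = (insert v F).erase u :=
            Finset.eq_of_subset_of_card_le hF₂sub' (by rw [hcard2, hF₂card])
          have hcomm : (insert v F).erase u = insert v (F.erase u) := by
            ext x
            simp only [Finset.mem_erase, Finset.mem_insert]
            constructor
            · rintro ⟨h1, h2 | h3⟩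
              · exact Or.inl h2
              · exact Or.inr ⟨h1, h3⟩
            · rintro (rfl | ⟨h1, h2⟩)
              · exact ⟨fun h => huv h.symm, Or.inl rfl⟩
              · exact ⟨h1, Or.inr h2⟩
          rw [hF₂eq, hcomm] at hF₂C
          exact hF₂C (hall u huF)
        -- assemble via the gluing lemma
        have h1 : Chordal (V.erase v) (c' + 1) (delVert C v) := by
          refine ihlk (V.erase v) (c' + 1) (delVert C v) ?_ hlkid
          intro F hF
          rcases Finset.mem_filter.1 hF with ⟨hFC, hvF⟩
          exact ⟨Finset.subset_erase.2 ⟨(hC F hFC).1, hvF⟩, (hC F hFC).2⟩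
        have h2 : Chordal (V.erase v) c' (lkC C v) := by
          refine ihdel (V.erase v) c' (lkC C v) ?_ hdelid
          intro G hG
          obtain ⟨F, hFC, hvF, rfl⟩ := mem_lkC.1 hG
          refine ⟨Finset.erase_subset_erase v (hC F hFC).1, ?_⟩
          rw [Finset.card_erase_of_mem hvF, (hC F hFC).2]; omega
        exact glue V v hvV c' (lkC C v) h2 C hC hex rfl h1

end Helpers

/-- If `⟨C^∨⟩` is vertex decomposable, then the `d`-clutter `C` is chordal. -/
theorem chordal_of_vdecomp_dual (V : Finset α) (d : ℕ) (C : Finset (Finset α))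
    (hC : IsClutter V (d + 1) C)
    (h : VDecomp (complexOf (clutterDual V (d + 1) C))) :
    Chordal V (d + 1) C :=
  main_aux _ h V (d + 1) C hC rfl

end ClutterPaper
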